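/- arXiv:2503.15116 — 6 statements merged into one kernel-verified Lean document; each statement's English description precedes it below -/
import Mathlib

section
/- Suppose n ≥ (t+1)(k-t+1), q ≥ t+1, n ≥ k > t ≥ 0, and assume (a) any t-intersecting family of k-subsets of an n-set has size at most C(n-t,k-t), and (b) any t-intersecting family of full-weight words of length k over Z_q has size at most (q-1)^(k-t). Then any (t,k)_q-intersecting family of words of length n has size at most C(n-t,k-t)·(q-1)^(k-t). -/
open Finset

/-- Assuming (a) the Erdős–Ko–Rado bound for `t`-intersecting families
of `k`-subsets of an `n`-set and (b) the bound `(q-1)^(k-t)` for `t`-intersecting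
families of full-weight words of length `k` over `Z_q`, any `(t,k)_q`-intersecting
family of words of length `n` has size at most `C(n-t,k-t) * (q-1)^(k-t)`. -/
theorem max_intersecting_family (q n k t : ℕ) (hq : 2 ≤ q) (htk : t < k) (hkn : k ≤ n)
    (hn : (t + 1) * (k - t + 1) ≤ n) (hqt : t + 1 ≤ q)
    (ha : ∀ H : Finset (Finset (Fin n)), (∀ s ∈ H, s.card = k) →
      (∀ s ∈ H, ∀ s' ∈ H, t ≤ (s ∩ s').card) → H.card ≤ (n - t).choose (k - t))
    (hb : ∀ W : Finset (Fin k → Fin q),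
      (∀ w ∈ W, ∀ i : Fin k, (w i : ℕ) ≠ 0) →
      (∀ u ∈ W, ∀ v ∈ W, t ≤ (univ.filter (fun i : Fin k => u i = v i)).card) →
      W.card ≤ (q - 1) ^ (k - t))
    (G : Finset (Fin n → Fin q))
    (hwt : ∀ x ∈ G, (univ.filter (fun i : Fin n => (x i : ℕ) ≠ 0)).card = k)
    (hint : ∀ x ∈ G, ∀ y ∈ G,
      t ≤ (univ.filter (fun i : Fin n => x i = y i ∧ (x i : ℕ) ≠ 0)).card) :
    G.card ≤ (n - t).choose (k - t) * (q - 1) ^ (k - t) := by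
  classical
  set supp : (Fin n → Fin q) → Finset (Fin n) :=
    fun x => univ.filter (fun i => (x i : ℕ) ≠ 0) with hsupp
  have key := Finset.card_eq_sum_card_fiberwise (f := supp) (s := G)
    (t := G.image supp) (fun x hx => Finset.mem_image_of_mem _ hx)
  have hH : (G.image supp).card ≤ (n - t).choose (k - t) := by
    apply ha
    · intro s hs
      obtain ⟨x, hx, rfl⟩ := Finset.mem_image.1 hs
      exact hwt x hx
    · intro s hs s' hs'
      obtain ⟨x, hx, rfl⟩ := Finset.mem_image.1 hs
      obtain ⟨y, hy, rfl⟩ := Finset.mem_image.1 hs'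
      refine le_trans (hint x hx y hy) (Finset.card_le_card ?_)
      intro i hi
      simp only [hsupp, Finset.mem_filter, Finset.mem_univ, Finset.mem_inter,
        true_and] at hi ⊢
      refine ⟨hi.2, ?_⟩
      rw [← hi.1]; exact hi.2
  have hfib : ∀ S ∈ G.image supp, (G.filter (fun x => supp x = S)).card ≤ (q-1)^(k-t) := by
    intro S hS
    obtain ⟨x₀, hx₀, hSx₀⟩ := Finset.mem_image.1 hS
    have hk : S.card = k := by rw [← hSx₀]; exact hwt x₀ hx₀
    set e := S.orderIsoOfFin hk with he
    set F := G.filter (fun x => supp x = S) with hF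
    have hmemS : ∀ x ∈ F, ∀ i : Fin n, i ∈ S ↔ (x i : ℕ) ≠ 0 := by
      intro x hx i
      have := (Finset.mem_filter.1 hx).2
      rw [← this]
      simp [hsupp]
    set g : (Fin n → Fin q) → (Fin k → Fin q) := fun x j => x (e j) with hg
    have hinj : Set.InjOn g F := by
      intro x hx y hy hxy
      funext i
      by_cases hi : i ∈ S
      · obtain ⟨j, hj⟩ : ∃ j, (e j : Fin n) = i := ⟨e.symm ⟨i, hi⟩, by simp⟩
        rw [← hj]
        exact congrFun hxy j
      · have h1 : (x i : ℕ) = 0 := by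
          by_contra h
          exact hi ((hmemS x hx i).2 h)
        have h2 : (y i : ℕ) = 0 := by
          by_contra h
          exact hi ((hmemS y hy i).2 h)
        exact Fin.ext (h1.trans h2.symm)
    rw [← Finset.card_image_of_injOn hinj]
    apply hb
    · intro w hw j
      obtain ⟨x, hx, rfl⟩ := Finset.mem_image.1 hw
      exact (hmemS x hx (e j)).1 (e j).2
    · intro u hu v hv
      obtain ⟨x, hx, rfl⟩ := Finset.mem_image.1 hu
      obtain ⟨y, hy, rfl⟩ := Finset.mem_image.1 hv
      have hxG : x ∈ G := (Finset.mem_filter.1 hx).1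
      have hyG : y ∈ G := (Finset.mem_filter.1 hy).1
      refine le_trans (hint x hxG y hyG) ?_
      apply Finset.card_le_card_of_injOn
        (fun i => if h : i ∈ S then e.symm ⟨i, h⟩ else ⟨0, lt_of_le_of_lt (Nat.zero_le t) htk⟩)
      · intro i hi
        simp only [Finset.mem_coe, Finset.mem_filter, Finset.mem_univ, true_and] at hi ⊢
        have hiS : i ∈ S := (hmemS x hx i).2 hi.2
        rw [dif_pos hiS]
        show x (e (e.symm ⟨i, hiS⟩)) = y (e (e.symm ⟨i, hiS⟩))
        simp only [OrderIso.apply_symm_apply]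
        exact hi.1
      · intro i hi i' hi' hii'
        simp only [Finset.mem_coe, Finset.mem_filter, Finset.mem_univ, true_and] at hi hi'
        have hiS : i ∈ S := (hmemS x hx i).2 hi.2
        have hiS' : i' ∈ S := (hmemS x hx i').2 hi'.2
        simp only [dif_pos hiS, dif_pos hiS'] at hii'
        have := e.symm.injective hii'
        exact Subtype.ext_iff.1 this
  calc G.card = ∑ S ∈ G.image supp, (G.filter (fun x => supp x = S)).card := key
    _ ≤ ∑ S ∈ G.image supp, (q-1)^(k-t) := Finset.sum_le_sum hfib
    _ = (G.image supp).card * (q-1)^(k-t) := by rw [Finset.sum_const, smul_eq_mul]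
    _ ≤ (n - t).choose (k - t) * (q - 1) ^ (k - t) := Nat.mul_le_mul_right _ hH
end

section
/- If n ≥ 2k-t-1, then the anticode A_q(t,k,n) has Hamming diameter exactly 2(k-t)-1: any two of its words are at Hamming distance at most 2(k-t)-1, and this distance is attained by some pair. -/
open Finset

lemma card_filter_val_mem {n : ℕ} (s : Finset ℕ) (hs : ∀ x ∈ s, x < n) :
    ((univ : Finset (Fin n)).filter (fun i : Fin n => (i : ℕ) ∈ s)).card = s.card := by
  apply Finset.card_bij (fun (i : Fin n) _ => (i : ℕ))
  · intro a ha; exact (mem_filter.mp ha).2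
  · intro a _ b _ h; exact Fin.val_injective h
  · intro b hb; exact ⟨⟨b, hs b hb⟩, by simp [hb], rfl⟩

/-- If `n ≥ 2k-t-1`, the anticode `A_q(t,k,n)` has Hamming diameter
exactly `2(k-t)-1`: any two of its words are at Hamming distance at most `2(k-t)-1`,
and this distance is attained by some pair. -/
theorem diameter_A (q n k t : ℕ) (hq : 3 ≤ q) (htk : t < k) (hkn : k ≤ n)
    (hn : 2 * k - t - 1 ≤ n) :
    (∀ x ∈ (univ : Finset (Fin n → Fin q)).filter (fun x =>
        (∀ i : Fin n, (i : ℕ) < t → (x i : ℕ) = 1) ∧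
        (∀ i : Fin n, (i : ℕ) = t → (x i : ℕ) ≠ 0) ∧
        (univ.filter (fun i : Fin n => t + 1 ≤ (i : ℕ) ∧ (x i : ℕ) ≠ 0)).card
          = k - t - 1),
     ∀ y ∈ (univ : Finset (Fin n → Fin q)).filter (fun x =>
        (∀ i : Fin n, (i : ℕ) < t → (x i : ℕ) = 1) ∧
        (∀ i : Fin n, (i : ℕ) = t → (x i : ℕ) ≠ 0) ∧
        (univ.filter (fun i : Fin n => t + 1 ≤ (i : ℕ) ∧ (x i : ℕ) ≠ 0)).card
          = k - t - 1),
      hammingDist x y ≤ 2 * (k - t) - 1) ∧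
    (∃ x ∈ (univ : Finset (Fin n → Fin q)).filter (fun x =>
        (∀ i : Fin n, (i : ℕ) < t → (x i : ℕ) = 1) ∧
        (∀ i : Fin n, (i : ℕ) = t → (x i : ℕ) ≠ 0) ∧
        (univ.filter (fun i : Fin n => t + 1 ≤ (i : ℕ) ∧ (x i : ℕ) ≠ 0)).card
          = k - t - 1),
     ∃ y ∈ (univ : Finset (Fin n → Fin q)).filter (fun x =>
        (∀ i : Fin n, (i : ℕ) < t → (x i : ℕ) = 1) ∧
        (∀ i : Fin n, (i : ℕ) = t → (x i : ℕ) ≠ 0) ∧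
        (univ.filter (fun i : Fin n => t + 1 ≤ (i : ℕ) ∧ (x i : ℕ) ≠ 0)).card
          = k - t - 1),
      hammingDist x y = 2 * (k - t) - 1) := by
  set m := k - t - 1 with hm
  have hmn : t + 1 + 2 * m ≤ n := by omega
  constructor
  · -- upper bound
    rintro x hx y hy
    simp only [mem_filter, mem_univ, true_and] at hx hy
    obtain ⟨hx1, hx2, hx3⟩ := hx
    obtain ⟨hy1, hy2, hy3⟩ := hy
    have hsub : (univ.filter (fun i : Fin n => x i ≠ y i)) ⊆
        (univ.filter (fun i : Fin n => (i : ℕ) = t)) ∪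
        ((univ.filter (fun i : Fin n => t + 1 ≤ (i : ℕ) ∧ (x i : ℕ) ≠ 0)) ∪
         (univ.filter (fun i : Fin n => t + 1 ≤ (i : ℕ) ∧ (y i : ℕ) ≠ 0))) := by
      intro i hi
      simp only [mem_filter, mem_univ, true_and, mem_union] at hi ⊢
      rcases lt_trichotomy (i : ℕ) t with h | h | h
      · exact absurd (Fin.val_injective ((hx1 i h).trans (hy1 i h).symm)) hi
      · exact Or.inl h
      · refine Or.inr ?_
        by_cases hxi : (x i : ℕ) = 0
        · refine Or.inr ⟨h, fun hyi => ?_⟩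
          exact hi (Fin.val_injective (hxi.trans hyi.symm))
        · exact Or.inl ⟨h, hxi⟩
    have h1 : (univ.filter (fun i : Fin n => (i : ℕ) = t)).card ≤ 1 := by
      apply Finset.card_le_one.mpr
      intro a ha b hb
      simp only [mem_filter] at ha hb
      exact Fin.val_injective (ha.2.trans hb.2.symm)
    calc hammingDist x y ≤ _ := Finset.card_le_card hsub
      _ ≤ (univ.filter (fun i : Fin n => (i : ℕ) = t)).card +
          ((univ.filter (fun i : Fin n => t + 1 ≤ (i : ℕ) ∧ (x i : ℕ) ≠ 0)).card +
           (univ.filter (fun i : Fin n => t + 1 ≤ (i : ℕ) ∧ (y i : ℕ) ≠ 0)).card) :=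
        le_trans (Finset.card_union_le _ _)
          (by gcongr; exact Finset.card_union_le _ _)
      _ ≤ 1 + (m + m) := by rw [hx3, hy3]; gcongr
      _ ≤ 2 * (k - t) - 1 := by omega
  · -- attained
    set x : Fin n → Fin q := fun i => if (i : ℕ) ≤ t + m then ⟨1, by omega⟩ else ⟨0, by omega⟩
      with hxdef
    set y : Fin n → Fin q := fun i =>
      if (i : ℕ) < t then ⟨1, by omega⟩
      else if (i : ℕ) = t then ⟨2, by omega⟩
      else if t + m + 1 ≤ (i : ℕ) ∧ (i : ℕ) ≤ t + 2 * m then ⟨1, by omega⟩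
      else ⟨0, by omega⟩ with hydef
    have hxval : ∀ i : Fin n, (x i : ℕ) = if (i : ℕ) ≤ t + m then 1 else 0 := by
      intro i; rw [hxdef]; dsimp only; split_ifs <;> rfl
    have hyval : ∀ i : Fin n, (y i : ℕ) =
        if (i : ℕ) < t then 1 else if (i : ℕ) = t then 2
        else if t + m + 1 ≤ (i : ℕ) ∧ (i : ℕ) ≤ t + 2 * m then 1 else 0 := by
      intro i; rw [hydef]; dsimp only; split_ifs <;> rfl
    refine ⟨x, ?_, y, ?_, ?_⟩
    · simp only [mem_filter, mem_univ, true_and]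
      refine ⟨fun i hi => by rw [hxval, if_pos (by omega)],
              fun i hi => by rw [hxval, if_pos (by omega)]; omega, ?_⟩
      have : (univ.filter (fun i : Fin n => t + 1 ≤ (i : ℕ) ∧ (x i : ℕ) ≠ 0))
          = univ.filter (fun i : Fin n => (i : ℕ) ∈ Finset.Icc (t+1) (t+m)) := by
        apply filter_congr
        intro i _
        simp only [Finset.mem_Icc, hxval]
        split_ifs <;> omega
      rw [this, card_filter_val_mem _ (fun z hz => by have := Finset.mem_Icc.mp hz; omega)]
      rw [Nat.card_Icc]; omega
    · simp only [mem_filter, mem_univ, true_and]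
      refine ⟨fun i hi => by rw [hyval, if_pos hi],
              fun i hi => by rw [hyval, if_neg (by omega), if_pos hi]; omega, ?_⟩
      have : (univ.filter (fun i : Fin n => t + 1 ≤ (i : ℕ) ∧ (y i : ℕ) ≠ 0))
          = univ.filter (fun i : Fin n => (i : ℕ) ∈ Finset.Icc (t+m+1) (t+2*m)) := by
        apply filter_congr
        intro i _
        simp only [Finset.mem_Icc, hyval]
        split_ifs <;> omega
      rw [this, card_filter_val_mem _ (fun z hz => by have := Finset.mem_Icc.mp hz; omega)]
      rw [Nat.card_Icc]; omega
    · have : (univ.filter (fun i : Fin n => x i ≠ y i))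
          = univ.filter (fun i : Fin n => (i : ℕ) ∈ Finset.Icc t (t + 2*m)) := by
        apply filter_congr
        intro i _
        simp only [Finset.mem_Icc, ne_eq, Fin.ext_iff, hxval, hyval]
        split_ifs <;> first | omega | (simp only [not_false_eq_true, true_iff]; omega)
      have hd : hammingDist x y = (univ.filter (fun i : Fin n => x i ≠ y i)).card := rfl
      rw [hd, this, card_filter_val_mem _ (fun z hz => by have := Finset.mem_Icc.mp hz; omega)]
      rw [Nat.card_Icc]; omega
end

section
/- Code-anticode bound: if C and A are sets of weight-k words of length n over Z_q such that any two distinct elements of C are at Hamming distance at least d and any two elements of A are at Hamming distance at most d-1, then |C|·|A| ≤ C(n,k)·(q-1)^k. -/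
open Finset

section CodeAnticode

variable (q n : ℕ) [NeZero q]

/-- Permutations of `Fin q` fixing `0`. -/
def PzG : Subgroup (Equiv.Perm (Fin q)) := MulAction.stabilizer (Equiv.Perm (Fin q)) (0 : Fin q)

lemma PzG_apply_zero (π : PzG q) : (π : Equiv.Perm (Fin q)) 0 = 0 := π.2

lemma PzG_eq_zero_iff (π : PzG q) (v : Fin q) : (π : Equiv.Perm (Fin q)) v = 0 ↔ v = 0 := by
  constructor
  · intro h
    have := PzG_apply_zero q π
    exact (Equiv.injective _) (h.trans this.symm)
  · rintro rfl; exact PzG_apply_zero q π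

/-- The group of Hamming-weight-preserving symmetries: a coordinate permutation together
with, for each coordinate, a permutation of the alphabet fixing `0`. -/
@[ext] structure GA where
  σ : Equiv.Perm (Fin n)
  π : Fin n → PzG q

namespace GA

variable {q n}

instance : Mul (GA q n) := ⟨fun a b => ⟨a.σ * b.σ, fun i => a.π i * b.π (a.σ⁻¹ i)⟩⟩
instance : One (GA q n) := ⟨⟨1, fun _ => 1⟩⟩
instance : Inv (GA q n) := ⟨fun a => ⟨a.σ⁻¹, fun i => (a.π (a.σ i))⁻¹⟩⟩

@[simp] lemma mul_σ (a b : GA q n) : (a * b).σ = a.σ * b.σ := rfl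
@[simp] lemma mul_π (a b : GA q n) (i : Fin n) : (a * b).π i = a.π i * b.π (a.σ⁻¹ i) := rfl
@[simp] lemma one_σ : (1 : GA q n).σ = 1 := rfl
@[simp] lemma one_π (i : Fin n) : (1 : GA q n).π i = 1 := rfl
@[simp] lemma inv_σ (a : GA q n) : a⁻¹.σ = a.σ⁻¹ := rfl
@[simp] lemma inv_π (a : GA q n) (i : Fin n) : a⁻¹.π i = (a.π (a.σ i))⁻¹ := rfl

instance : Group (GA q n) where
  mul_assoc a b c := by
    ext i <;> simp [mul_assoc, Equiv.Perm.mul_apply, mul_inv_rev]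
  one_mul a := by ext i <;> simp
  mul_one a := by ext i <;> simp
  inv_mul_cancel a := by ext i <;> simp

instance : Finite (GA q n) :=
  Finite.of_surjective (fun p : Equiv.Perm (Fin n) × (Fin n → PzG q) => GA.mk p.1 p.2)
    (fun g => ⟨(g.σ, g.π), rfl⟩)

noncomputable instance : Fintype (GA q n) := Fintype.ofFinite _

instance : SMul (GA q n) (Fin n → Fin q) :=
  ⟨fun g x i => (g.π i : Equiv.Perm (Fin q)) (x (g.σ⁻¹ i))⟩

@[simp] lemma smul_apply (g : GA q n) (x : Fin n → Fin q) (i : Fin n) :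
    (g • x) i = (g.π i : Equiv.Perm (Fin q)) (x (g.σ⁻¹ i)) := rfl

instance : MulAction (GA q n) (Fin n → Fin q) where
  one_smul x := by funext i; simp
  mul_smul a b x := by funext i; simp [Equiv.Perm.mul_apply]

lemma smul_eq_zero_iff (g : GA q n) (x : Fin n → Fin q) (i : Fin n) :
    (g • x) i = 0 ↔ x (g.σ⁻¹ i) = 0 := by
  simp only [smul_apply]
  exact PzG_eq_zero_iff q _ _

end GA

/-- Hamming weight. -/
def wt (x : Fin n → Fin q) : ℕ := (univ.filter fun i => x i ≠ 0).card

lemma wt_smul (g : GA q n) (x : Fin n → Fin q) : wt q n (g • x) = wt q n x := by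
  apply Finset.card_nbij' (fun i => g.σ⁻¹ i) (fun i => g.σ i)
  · intro i hi
    simp only [mem_coe, mem_filter, mem_univ, true_and] at hi ⊢
    rw [ne_eq, ← GA.smul_eq_zero_iff g x i]
    exact hi
  · intro i hi
    simp only [mem_coe, mem_filter, mem_univ, true_and] at hi ⊢
    rw [ne_eq, GA.smul_eq_zero_iff]
    simpa using hi
  · intro i _; simp
  · intro i _; simp

lemma ga_hammingDist_smul (g : GA q n) (x y : Fin n → Fin q) :
    hammingDist (g • x) (g • y) = hammingDist x y := by
  show (univ.filter fun i => (g • x) i ≠ (g • y) i).card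
      = (univ.filter fun i => x i ≠ y i).card
  apply Finset.card_nbij' (fun i => g.σ⁻¹ i) (fun i => g.σ i)
  · intro i hi
    simp only [mem_coe, mem_filter, mem_univ, true_and, GA.smul_apply] at hi ⊢
    intro h; exact hi (by rw [h])
  · intro i hi
    simp only [mem_coe, mem_filter, mem_univ, true_and, GA.smul_apply] at hi ⊢
    simp only [Equiv.Perm.coe_inv, Equiv.symm_apply_apply]
    intro h
    exact hi ((Equiv.injective _) h)
  · intro i _; simp
  · intro i _; simp

/-- Transitivity of the symmetry group on words of a given weight. -/
lemma exists_smul_eq_ga (x y : Fin n → Fin q) (h : wt q n x = wt q n y) :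
    ∃ g : GA q n, g • x = y := by
  classical
  have hcard : Fintype.card {i // x i ≠ 0} = Fintype.card {i // y i ≠ 0} := by
    rw [Fintype.card_subtype, Fintype.card_subtype]
    exact h
  obtain ⟨σ, hσ⟩ : ∃ σ : Equiv.Perm (Fin n), ∀ j, (x j ≠ 0 ↔ y (σ j) ≠ 0) := by
    let e : {i // x i ≠ 0} ≃ {i // y i ≠ 0} := Fintype.equivOfCardEq hcard
    refine ⟨e.extendSubtype, fun j => ⟨fun hj => e.extendSubtype_mem j hj, fun hyj => ?_⟩⟩
    by_contra hxj
    exact (e.extendSubtype_not_mem j (by simpa using hxj)) hyj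
  have key : ∀ i : Fin n, (x (σ⁻¹ i) = 0 ↔ y i = 0) := by
    intro i
    have := hσ (σ⁻¹ i)
    rw [Equiv.Perm.coe_inv, Equiv.apply_symm_apply] at this
    exact not_iff_not.mp this
  refine ⟨⟨σ, fun i => ⟨Equiv.swap (x (σ⁻¹ i)) (y i), ?_⟩⟩, ?_⟩
  · show Equiv.swap (x (σ⁻¹ i)) (y i) • (0 : Fin q) = 0
    show Equiv.swap (x (σ⁻¹ i)) (y i) 0 = 0
    by_cases hy : y i = 0
    · have hx : x (σ⁻¹ i) = 0 := (key i).2 hy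
      rw [hx, ← hy]
      exact Equiv.swap_apply_left _ _
    · have hx : x (σ⁻¹ i) ≠ 0 := fun h0 => hy ((key i).1 h0)
      exact Equiv.swap_apply_of_ne_of_ne (Ne.symm hx) (Ne.symm hy)
  · funext i
    show Equiv.swap (x (σ⁻¹ i)) (y i) (x (σ⁻¹ i)) = y i
    exact Equiv.swap_apply_left _ _

/-- All fibers `{g : g • a = c}` over pairs of the same weight have the same cardinality. -/
lemma fiber_card_eq (a c a' c' : Fin n → Fin q)
    (h1 : wt q n a = wt q n a') (h2 : wt q n c = wt q n c') :
    (univ.filter fun g : GA q n => g • a = c).card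
      = (univ.filter fun g : GA q n => g • a' = c').card := by
  classical
  obtain ⟨g₁, hg₁⟩ := exists_smul_eq_ga q n a' a h1.symm
  obtain ⟨g₂, hg₂⟩ := exists_smul_eq_ga q n c c' h2
  apply Finset.card_nbij' (fun g => g₂ * g * g₁) (fun g => g₂⁻¹ * g * g₁⁻¹)
  · intro g hg
    simp only [mem_coe, mem_filter, mem_univ, true_and] at hg ⊢
    rw [mul_smul, mul_smul, hg₁, hg, hg₂]
  · intro g hg
    simp only [mem_coe, mem_filter, mem_univ, true_and] at hg ⊢
    rw [← hg₁, mul_smul, mul_smul, inv_smul_smul, hg, ← hg₂, inv_smul_smul]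
  · intro g _; group
  · intro g _; group

/-- Counting words of weight `k`. -/
lemma card_weight_eq (k : ℕ) :
    (univ.filter fun x : Fin n → Fin q => wt q n x = k).card
      = n.choose k * (q - 1) ^ k := by
  classical
  rw [Finset.card_eq_sum_card_fiberwise
    (f := fun x : Fin n → Fin q => univ.filter fun i => x i ≠ 0)
    (t := Finset.powersetCard k univ)
    (by intro x hx
        simp only [mem_coe, mem_filter, mem_univ, true_and] at hx
        rw [mem_coe, mem_powersetCard_univ]
        exact hx)]
  have hfib : ∀ s ∈ Finset.powersetCard k univ,
      (((univ.filter fun x : Fin n → Fin q => wt q n x = k)).filter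
        (fun x => univ.filter (fun i => x i ≠ 0) = s)).card = (q - 1) ^ k := by
    intro s hs
    rw [mem_powersetCard_univ] at hs
    have hset : (((univ.filter fun x : Fin n → Fin q => wt q n x = k)).filter
        (fun x => univ.filter (fun i => x i ≠ 0) = s))
        = univ.filter (fun x : Fin n → Fin q => univ.filter (fun i => x i ≠ 0) = s) := by
      ext x
      simp only [mem_filter, mem_univ, true_and, wt]
      constructor
      · rintro ⟨_, h⟩; exact h
      · intro h; exact ⟨mem_filter.mpr ⟨mem_univ _, by show wt q n x = k; rw [wt, h, hs]⟩, h⟩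
    rw [hset, ← Fintype.card_subtype]
    have E : {x : Fin n → Fin q // univ.filter (fun i => x i ≠ 0) = s}
        ≃ (∀ _ : (s : Finset (Fin n)), {v : Fin q // v ≠ 0}) :=
      { toFun := fun x j => ⟨x.1 j.1, by
          have hmem : (j : Fin n) ∈ filter (fun i => x.1 i ≠ 0) univ ↔ (j : Fin n) ∈ s :=
            Finset.ext_iff.mp x.2 _
          simp only [mem_filter, mem_univ, true_and] at hmem
          exact hmem.2 j.2⟩
        invFun := fun f => ⟨fun i => if h : i ∈ s then (f ⟨i, h⟩).1 else 0, by
          ext i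
          simp only [mem_filter, mem_univ, true_and]
          split_ifs with h
          · simp only [h, iff_true]
            exact (f ⟨i, h⟩).2
          · simp [h]⟩
        left_inv := fun x => by
          apply Subtype.ext
          funext i
          by_cases h : i ∈ s
          · simp [h]
          · simp only [dif_neg h]
            have hmem : i ∈ filter (fun i => x.1 i ≠ 0) univ ↔ i ∈ s :=
              Finset.ext_iff.mp x.2 _
            simp only [mem_filter, mem_univ, true_and] at hmem
            by_contra hne
            exact h (hmem.1 (Ne.symm hne))
        right_inv := fun f => by
          funext j
          apply Subtype.ext
          simp }
    rw [Fintype.card_congr E, Fintype.card_pi]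
    have hv : Fintype.card {v : Fin q // v ≠ 0} = q - 1 := by
      rw [Fintype.card_subtype_compl, Fintype.card_fin, Fintype.card_subtype_eq]
    simp only [hv, Finset.prod_const, Finset.card_univ, Fintype.card_coe]
    rw [hs]
  rw [Finset.sum_congr rfl hfib, Finset.sum_const, Finset.card_powersetCard, card_univ,
    Fintype.card_fin, smul_eq_mul]

lemma exists_wt (k : ℕ) (hq : 2 ≤ q) (hkn : k ≤ n) :
    ∃ x : Fin n → Fin q, wt q n x = k := by
  refine ⟨fun i => if (i : ℕ) < k then ⟨1, by omega⟩ else 0, ?_⟩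
  unfold wt
  have hset : (univ.filter fun i : Fin n =>
      (if (i : ℕ) < k then (⟨1, by omega⟩ : Fin q) else 0) ≠ 0)
      = univ.filter fun i : Fin n => (i : ℕ) < k := by
    apply Finset.filter_congr
    intro i _
    split_ifs with h
    · simp only [h, iff_true]
      intro h0
      have := congrArg Fin.val h0
      simp only [Fin.val_zero] at this
      omega
    · simp [h]
  rw [hset]
  rw [Finset.card_bij' (fun (i : Fin n) _ => (i : ℕ))
    (fun j hj => (⟨j, lt_of_lt_of_le (Finset.mem_range.mp hj) hkn⟩ : Fin n))
    (t := Finset.range k) ?_ ?_ ?_ ?_, Finset.card_range]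
  · intro i hi
    simp only [mem_filter, mem_univ, true_and] at hi
    simpa using hi
  · intro j hj
    simp only [mem_filter, mem_univ, true_and]
    simpa using Finset.mem_range.mp hj
  · intro i _; simp
  · intro j _; simp

end CodeAnticode

/-- Code-anticode bound. If `C` and `A` are sets of weight-`k` words of
length `n` over `Z_q` such that any two distinct elements of `C` are at Hamming
distance at least `d` and any two elements of `A` are at Hamming distance at most
`d-1`, then `|C| * |A| ≤ C(n,k) * (q-1)^k`. -/
theorem code_anticode_bound (q n k d : ℕ) (hq : 2 ≤ q) (hkn : k ≤ n) (hd : 1 ≤ d)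
    (C A : Finset (Fin n → Fin q))
    (hCwt : ∀ x ∈ C, (univ.filter (fun i : Fin n => (x i : ℕ) ≠ 0)).card = k)
    (hAwt : ∀ x ∈ A, (univ.filter (fun i : Fin n => (x i : ℕ) ≠ 0)).card = k)
    (hC : ∀ x ∈ C, ∀ y ∈ C, x ≠ y → d ≤ hammingDist x y)
    (hA : ∀ x ∈ A, ∀ y ∈ A, hammingDist x y ≤ d - 1) :
    C.card * A.card ≤ n.choose k * (q - 1) ^ k := by
  classical
  haveI : NeZero q := ⟨by omega⟩
  have hval : ∀ x : Fin n → Fin q,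
      (univ.filter (fun i : Fin n => (x i : ℕ) ≠ 0)) = (univ.filter fun i => x i ≠ 0) := by
    intro x
    apply Finset.filter_congr
    intro i _
    exact Fin.val_ne_zero_iff
  have hCwt' : ∀ x ∈ C, wt q n x = k := by
    intro x hx; rw [wt, ← hval]; exact hCwt x hx
  have hAwt' : ∀ x ∈ A, wt q n x = k := by
    intro x hx; rw [wt, ← hval]; exact hAwt x hx
  obtain ⟨x0, hx0⟩ := exists_wt q n k hq hkn
  set m := (univ.filter fun g : GA q n => g • x0 = x0).card with hm
  set W := (univ.filter fun x : Fin n → Fin q => wt q n x = k) with hW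
  -- |G| = |W| * m
  have hG : (univ : Finset (GA q n)).card = W.card * m := by
    rw [Finset.card_eq_sum_card_fiberwise (f := fun g : GA q n => g • x0) (t := W)
      (by intro g _; rw [hW, mem_coe, mem_filter]; exact ⟨mem_univ _, by rw [wt_smul, hx0]⟩)]
    rw [Finset.sum_congr rfl (fun c hc => ?_), Finset.sum_const, smul_eq_mul]
    rw [hW, mem_filter] at hc
    rw [hm]
    exact fiber_card_eq q n x0 c x0 x0 rfl (by rw [hc.2, hx0])
  -- each translate of A meets C in at most one point
  have hone : ∀ g : GA q n, (A.filter fun a => g • a ∈ C).card ≤ 1 := by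
    intro g
    rw [Finset.card_le_one]
    intro a ha b hb
    simp only [mem_filter] at ha hb
    by_contra hne
    have hgne : g • a ≠ g • b := fun h => hne (MulAction.injective g h)
    have h1 : d ≤ hammingDist (g • a) (g • b) := hC _ ha.2 _ hb.2 hgne
    rw [ga_hammingDist_smul] at h1
    have h2 : hammingDist a b ≤ d - 1 := hA _ ha.1 _ hb.1
    omega
  -- the double count
  have hS_eq : ∑ g : GA q n, (A.filter fun a => g • a ∈ C).card = A.card * (C.card * m) := by
    have swap : ∑ g : GA q n, (A.filter fun a => g • a ∈ C).card
        = ∑ a ∈ A, (univ.filter fun g : GA q n => g • a ∈ C).card := by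
      simp only [Finset.card_filter]
      rw [Finset.sum_comm]
    rw [swap]
    rw [Finset.sum_congr rfl (fun a ha => ?_), Finset.sum_const, smul_eq_mul]
    rw [Finset.card_eq_sum_card_fiberwise (f := fun g : GA q n => g • a) (t := C)
      (by intro g hg; exact mem_coe.mpr (mem_filter.mp (mem_coe.mp hg)).2)]
    rw [Finset.sum_congr rfl (fun c hc => ?_), Finset.sum_const, smul_eq_mul]
    have hset : ((univ.filter fun g : GA q n => g • a ∈ C).filter fun g => g • a = c)
        = univ.filter fun g : GA q n => g • a = c := by
      rw [Finset.filter_filter]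
      apply Finset.filter_congr
      intro g _
      constructor
      · rintro ⟨_, h⟩; exact h
      · intro h; exact ⟨by rw [h]; exact hc, h⟩
    rw [hset, hm]
    exact fiber_card_eq q n a c x0 x0 (by rw [hAwt' a ha, hx0]) (by rw [hCwt' c hc, hx0])
  have hS_le : ∑ g : GA q n, (A.filter fun a => g • a ∈ C).card ≤ W.card * m := by
    calc ∑ g : GA q n, (A.filter fun a => g • a ∈ C).card
        ≤ ∑ _g : GA q n, 1 := Finset.sum_le_sum (fun g _ => hone g)
      _ = (univ : Finset (GA q n)).card := by simp
      _ = W.card * m := hG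
  have hmpos : 0 < m := by
    rw [hm]
    apply Finset.card_pos.mpr
    exact ⟨1, by simp [one_smul]⟩
  have hfinal : C.card * A.card * m ≤ W.card * m := by
    calc C.card * A.card * m = A.card * (C.card * m) := by ring
      _ ≤ W.card * m := by rw [← hS_eq]; exact hS_le
  have := Nat.le_of_mul_le_mul_right hfinal hmpos
  rwa [hW, card_weight_eq] at this
end

section
/- If n ≥ 2k-t-ε, then the anticode A_q(t,ε,k,n) has Hamming diameter exactly 2k-2t-ε. -/
open Finset

/-- The anticode `A_q(t,ε,k,n)`: words with 1's in the first `t` coordinates,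
arbitrary nonzero symbols in the next `ε` coordinates, and exactly `k-t-ε`
nonzero entries in the remaining `n-t-ε` coordinates. -/
def anticodeA (q n t ε k : ℕ) : Finset (Fin n → Fin q) :=
  (univ : Finset (Fin n → Fin q)).filter (fun x =>
    (∀ i : Fin n, (i : ℕ) < t → (x i : ℕ) = 1) ∧
    (∀ i : Fin n, t ≤ (i : ℕ) → (i : ℕ) < t + ε → (x i : ℕ) ≠ 0) ∧
    (univ.filter (fun i : Fin n => t + ε ≤ (i : ℕ) ∧ (x i : ℕ) ≠ 0)).card = k - t - ε)

lemma card_filter_interval (n a b : ℕ) (hb : b ≤ n) :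
    (univ.filter fun i : Fin n => a ≤ (i : ℕ) ∧ (i : ℕ) < b).card = b - a := by
  rw [← Nat.card_Ico a b]
  refine Finset.card_bij (fun i _ => (i : ℕ)) ?_ ?_ ?_
  · intro i hi
    simp only [Finset.mem_filter] at hi
    simp only [Finset.mem_Ico]
    omega
  · intro i _ j _ h
    exact Fin.ext h
  · intro m hm
    simp only [Finset.mem_Ico] at hm
    exact ⟨⟨m, by omega⟩, by simp; omega, rfl⟩

/-- If `n ≥ 2k-t-ε`, then `A_q(t,ε,k,n)` has Hamming diameter exactly
`2k-2t-ε`. -/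
theorem diameter_anticodeA (q n t ε k : ℕ) (hq : 3 ≤ q) (hε : t + ε ≤ k)
    (htk : t < k) (hkn : k ≤ n) (hn : 2 * k - t - ε ≤ n) :
    (∀ x ∈ anticodeA q n t ε k, ∀ y ∈ anticodeA q n t ε k,
      hammingDist x y ≤ 2 * k - 2 * t - ε) ∧
    (∃ x ∈ anticodeA q n t ε k, ∃ y ∈ anticodeA q n t ε k,
      hammingDist x y = 2 * k - 2 * t - ε) := by
  constructor
  · intro x hx y hy
    simp only [anticodeA, Finset.mem_filter, Finset.mem_univ, true_and] at hx hy
    obtain ⟨hx1, hx2, hx3⟩ := hx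
    obtain ⟨hy1, hy2, hy3⟩ := hy
    have hsub : ({i | x i ≠ y i} : Finset (Fin n)) ⊆
        (univ.filter fun i : Fin n => t ≤ (i : ℕ) ∧ (i : ℕ) < t + ε) ∪
        ((univ.filter fun i : Fin n => t + ε ≤ (i : ℕ) ∧ (x i : ℕ) ≠ 0) ∪
         (univ.filter fun i : Fin n => t + ε ≤ (i : ℕ) ∧ (y i : ℕ) ≠ 0)) := by
      intro i hi
      simp only [Finset.mem_filter, Finset.mem_union, Finset.mem_univ, true_and,
        Finset.mem_filter] at hi ⊢
      by_cases h1 : (i : ℕ) < t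
      · exact absurd (Fin.ext ((hx1 i h1).trans (hy1 i h1).symm)) hi
      by_cases h2 : (i : ℕ) < t + ε
      · exact Or.inl ⟨by omega, h2⟩
      · by_cases h3 : (x i : ℕ) ≠ 0
        · exact Or.inr (Or.inl ⟨by omega, h3⟩)
        · refine Or.inr (Or.inr ⟨by omega, fun h4 => hi (Fin.ext ?_)⟩)
          omega
    calc hammingDist x y ≤ _ := Finset.card_le_card hsub
      _ ≤ _ + _ := Finset.card_union_le _ _
      _ ≤ _ + (_ + _) := by gcongr <;> exact Finset.card_union_le _ _
      _ ≤ 2 * k - 2 * t - ε := by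
          rw [hx3, hy3, card_filter_interval n t (t + ε) (by omega)]
          omega
  · have h1 : 1 < q := by omega
    have h2 : 2 < q := by omega
    refine ⟨(fun i => if (i : ℕ) < k then (⟨1, h1⟩ : Fin q) else ⟨0, by omega⟩), ?_,
      (fun i => if (i : ℕ) < t then (⟨1, h1⟩ : Fin q) else if (i : ℕ) < t + ε then ⟨2, h2⟩
        else if k ≤ (i : ℕ) ∧ (i : ℕ) < 2 * k - t - ε then ⟨1, h1⟩ else ⟨0, by omega⟩), ?_, ?_⟩
    · simp only [anticodeA, Finset.mem_filter, Finset.mem_univ, true_and]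
      refine ⟨fun i hi => by simp [show (i : ℕ) < k by omega], fun i hi hi' => by
        simp [show (i : ℕ) < k by omega], ?_⟩
      rw [show (k - t - ε) = k - (t + ε) by omega,
        ← card_filter_interval n (t + ε) k hkn]
      congr 1
      apply Finset.filter_congr
      intro i _
      by_cases h : (i : ℕ) < k <;> simp [h]
    · simp only [anticodeA, Finset.mem_filter, Finset.mem_univ, true_and]
      refine ⟨fun i hi => by simp [hi], fun i hi hi' => by
        simp [show ¬ (i : ℕ) < t by omega, hi'], ?_⟩
      rw [show (k - t - ε) = (2 * k - t - ε) - k by omega,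
        ← card_filter_interval n k (2 * k - t - ε) hn]
      congr 1
      apply Finset.filter_congr
      intro i _
      by_cases ha : (i : ℕ) < t
      · simp [ha]; omega
      by_cases hb : (i : ℕ) < t + ε
      · simp [ha, hb]; omega
      by_cases hc : k ≤ (i : ℕ) ∧ (i : ℕ) < 2 * k - t - ε
      · simp [ha, hb, hc]; omega
      · simp [ha, hb, hc]
    · show ({i | _ ≠ _} : Finset (Fin n)).card = _
      rw [show (2 * k - 2 * t - ε) = (2 * k - t - ε) - t by omega,
        ← card_filter_interval n t (2 * k - t - ε) hn]
      congr 1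
      ext i
      simp only [Finset.mem_filter, Finset.mem_univ, true_and]
      by_cases ha : (i : ℕ) < t
      · simp [ha, show (i : ℕ) < k by omega]
      by_cases hb : (i : ℕ) < t + ε
      · simp [ha, hb, show (i : ℕ) < k by omega, Fin.ext_iff]; omega
      by_cases hc : (i : ℕ) < k
      · simp [ha, hb, hc, show ¬(k ≤ (i : ℕ) ∧ (i : ℕ) < 2 * k - t - ε) by omega,
          Fin.ext_iff]
        omega
      by_cases hd : (i : ℕ) < 2 * k - t - ε
      · simp [ha, hb, hc, show k ≤ (i : ℕ) ∧ (i : ℕ) < 2 * k - t - ε by omega,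
          Fin.ext_iff]
        omega
      · simp [ha, hb, hc, show ¬(k ≤ (i : ℕ) ∧ (i : ℕ) < 2 * k - t - ε) by omega]
        omega
end

section
/- For n ≥ 2k-t-ε and k-t-ε ≥ 1, the anticode A_q(t-1, ε+2, k, n) has strictly more elements than A_q(t, ε, k, n) if and only if q-1 > (n-t-ε)/(k-t-ε), equivalently n < (q-2)(k-t-ε)+k. (Both anticodes have Hamming diameter 2k-2t-ε.) -/
open Finset

lemma fin_card_filter_Ico (n a b : ℕ) (hb : b ≤ n) :
    (univ.filter fun i : Fin n => a ≤ (i:ℕ) ∧ (i:ℕ) < b).card = b - a := by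
  have h : ((univ.filter fun i : Fin n => a ≤ (i:ℕ) ∧ (i:ℕ) < b).map Fin.valEmbedding)
      = Finset.Ico a b := by
    ext m
    simp only [Finset.mem_map, Finset.mem_filter, Finset.mem_univ, true_and,
      Fin.valEmbedding_apply, Finset.mem_Ico]
    constructor
    · rintro ⟨i, hi, rfl⟩; exact hi
    · rintro ⟨h1, h2⟩; exact ⟨⟨m, lt_of_lt_of_le h2 hb⟩, ⟨h1, h2⟩, rfl⟩
  rw [← Finset.card_map Fin.valEmbedding, h, Nat.card_Ico]

lemma fin_card_filter_le (n a : ℕ) :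
    (univ.filter fun i : Fin n => a ≤ (i:ℕ)).card = n - a := by
  have h : (univ.filter fun i : Fin n => a ≤ (i:ℕ))
      = univ.filter fun i : Fin n => a ≤ (i:ℕ) ∧ (i:ℕ) < n := by
    ext i; simp [i.isLt]
  rw [h, fin_card_filter_Ico n a n le_rfl]

lemma card_filter_val_eq (q c : ℕ) (hc : c < q) :
    (univ.filter fun v : Fin q => (v:ℕ) = c).card = 1 := by
  have h : (univ.filter fun v : Fin q => (v:ℕ) = c) = {⟨c, hc⟩} := by
    ext v; simp [Fin.ext_iff]
  rw [h, Finset.card_singleton]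

lemma card_filter_val_ne (q : ℕ) (hq : 0 < q) :
    (univ.filter fun v : Fin q => (v:ℕ) ≠ 0).card = q - 1 := by
  have h : (univ.filter fun v : Fin q => (v:ℕ) ≠ 0)
      = univ \ (univ.filter fun v : Fin q => (v:ℕ) = 0) := by
    rw [← Finset.filter_not]
  rw [h, Finset.card_sdiff_of_subset (Finset.filter_subset _ _), card_filter_val_eq q 0 hq,
    Finset.card_univ, Fintype.card_fin]

lemma card_anticode (q n t ε k : ℕ) (hq : 2 ≤ q) (htk : t + ε ≤ k) (hkn : k ≤ n) :
    (anticodeA q n t ε k).card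
      = (n - t - ε).choose (k - t - ε) * (q - 1) ^ (ε + (k - t - ε)) := by
  classical
  set K := k - t - ε with hK
  set Tail : Finset (Fin n) := univ.filter (fun i : Fin n => t + ε ≤ (i:ℕ)) with hTail
  set A : Finset (Fin n) → Fin n → Finset (Fin q) := fun s i =>
    univ.filter (fun v : Fin q =>
      if (i:ℕ) < t then (v:ℕ) = 1
      else if (i:ℕ) < t + ε then (v:ℕ) ≠ 0
      else if i ∈ s then (v:ℕ) ≠ 0 else (v:ℕ) = 0) with hA
  -- support of a piFinset member is s
  have hsupp : ∀ s : Finset (Fin n), s ⊆ Tail → ∀ x : Fin n → Fin q,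
      x ∈ Fintype.piFinset (A s) →
      univ.filter (fun i : Fin n => t + ε ≤ (i:ℕ) ∧ (x i : ℕ) ≠ 0) = s := by
    intro s hs x hx
    ext i
    have hxi := (Fintype.mem_piFinset.mp hx) i
    simp only [hA, Finset.mem_filter, Finset.mem_univ, true_and] at hxi
    simp only [Finset.mem_filter, Finset.mem_univ, true_and]
    constructor
    · rintro ⟨hi, hne⟩
      rw [if_neg (by omega), if_neg (by omega)] at hxi
      by_cases hmem : i ∈ s
      · exact hmem
      · rw [if_neg hmem] at hxi; exact absurd hxi hne
    · intro hi
      have hTi : t + ε ≤ (i:ℕ) := by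
        have := hs hi
        simpa [hTail] using this
      refine ⟨hTi, ?_⟩
      rw [if_neg (by omega), if_neg (by omega), if_pos hi] at hxi
      exact hxi
  -- decomposition of anticode as a biUnion
  have hunion : anticodeA q n t ε k
      = (Tail.powersetCard K).biUnion (fun s => Fintype.piFinset (A s)) := by
    ext x
    simp only [anticodeA, Finset.mem_filter, Finset.mem_univ, true_and,
      Finset.mem_biUnion, Finset.mem_powersetCard]
    constructor
    · rintro ⟨h1, h2, h3⟩
      refine ⟨univ.filter (fun i : Fin n => t + ε ≤ (i:ℕ) ∧ (x i : ℕ) ≠ 0), ⟨?_, h3⟩, ?_⟩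
      · intro i hi
        simp only [Finset.mem_filter, Finset.mem_univ, true_and] at hi
        simp [hTail, hi.1]
      · rw [Fintype.mem_piFinset]
        intro i
        simp only [hA, Finset.mem_filter, Finset.mem_univ, true_and]
        by_cases c1 : (i:ℕ) < t
        · rw [if_pos c1]; exact h1 i c1
        · rw [if_neg c1]
          by_cases c2 : (i:ℕ) < t + ε
          · rw [if_pos c2]; exact h2 i (by omega) c2
          · rw [if_neg c2]
            split_ifs with h4
            · exact h4.2
            · by_contra hc
              exact h4 ⟨by omega, hc⟩
    · rintro ⟨s, ⟨hsub, hcard⟩, hx⟩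
      have hxi := Fintype.mem_piFinset.mp hx
      refine ⟨?_, ?_, ?_⟩
      · intro i hi
        have := hxi i
        simp only [hA, Finset.mem_filter, Finset.mem_univ, true_and, if_pos hi] at this
        exact this
      · intro i hi1 hi2
        have := hxi i
        simp only [hA, Finset.mem_filter, Finset.mem_univ, true_and,
          if_neg (by omega : ¬ (i:ℕ) < t), if_pos hi2] at this
        exact this
      · rw [hsupp s hsub x hx]; exact hcard
  -- disjointness
  have hdisj : ∀ s ∈ Tail.powersetCard K, ∀ s' ∈ Tail.powersetCard K, s ≠ s' →
      Disjoint (Fintype.piFinset (A s)) (Fintype.piFinset (A s')) := by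
    intro s hs s' hs' hne
    rw [Finset.mem_powersetCard] at hs hs'
    rw [Finset.disjoint_left]
    intro x hx hx'
    exact hne ((hsupp s hs.1 x hx).symm.trans (hsupp s' hs'.1 x hx'))
  -- cardinality of each piece
  have hpiece : ∀ s ∈ Tail.powersetCard K,
      (Fintype.piFinset (A s)).card = (q - 1) ^ (ε + K) := by
    intro s hs
    rw [Finset.mem_powersetCard] at hs
    rw [Fintype.card_piFinset]
    have hvals : ∀ i : Fin n, (A s i).card
        = if ((t ≤ (i:ℕ) ∧ (i:ℕ) < t + ε) ∨ i ∈ s) then q - 1 else 1 := by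
      intro i
      by_cases c1 : (i:ℕ) < t
      · have hns : i ∉ s := by
          intro hmem
          have := hs.1 hmem
          simp only [hTail, Finset.mem_filter, Finset.mem_univ, true_and] at this
          omega
        rw [if_neg (by simp [hns]; omega)]
        simp only [hA, if_pos c1]
        exact card_filter_val_eq q 1 (by omega)
      · by_cases c2 : (i:ℕ) < t + ε
        · rw [if_pos (Or.inl ⟨by omega, c2⟩)]
          simp only [hA, if_neg c1, if_pos c2]
          exact card_filter_val_ne q (by omega)
        · by_cases c3 : i ∈ s
          · rw [if_pos (Or.inr c3)]
            simp only [hA, if_neg c1, if_neg c2, if_pos c3]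
            exact card_filter_val_ne q (by omega)
          · rw [if_neg (by simp [c3]; omega)]
            simp only [hA, if_neg c1, if_neg c2, if_neg c3]
            exact card_filter_val_eq q 0 (by omega)
    rw [Finset.prod_congr rfl (fun i _ => hvals i), Finset.prod_ite, Finset.prod_const,
      Finset.prod_const_one, mul_one]
    congr 1
    have hsplit : (univ.filter fun i : Fin n => (t ≤ (i:ℕ) ∧ (i:ℕ) < t + ε) ∨ i ∈ s)
        = (univ.filter fun i : Fin n => t ≤ (i:ℕ) ∧ (i:ℕ) < t + ε) ∪ s := by
      rw [Finset.filter_or]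
      congr 1
      ext i; simp
    rw [hsplit, Finset.card_union_of_disjoint, fin_card_filter_Ico n t (t + ε) (by omega),
      hs.2]
    · omega
    · rw [Finset.disjoint_left]
      intro i hi hi'
      simp only [Finset.mem_filter, Finset.mem_univ, true_and] at hi
      have := hs.1 hi'
      simp only [hTail, Finset.mem_filter, Finset.mem_univ, true_and] at this
      omega
  rw [hunion, Finset.card_biUnion hdisj, Finset.sum_congr rfl hpiece, Finset.sum_const,
    smul_eq_mul, Finset.card_powersetCard]
  have hTc : Tail.card = n - t - ε := by
    rw [hTail, fin_card_filter_le]; omega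
  rw [hTc]

/-- For `n ≥ 2k-t-ε` and `k-t-ε ≥ 1`, the anticode
`A_q(t-1, ε+2, k, n)` has strictly more elements than `A_q(t, ε, k, n)` if and only
if `q-1 > (n-t-ε)/(k-t-ε)`, equivalently `n < (q-2)(k-t-ε)+k`. -/
theorem compare_anticodes (q n t ε k : ℕ) (hq : 3 ≤ q) (ht : 1 ≤ t)
    (hε : t + ε < k) (hkn : k ≤ n) (hn : 2 * k - t - ε ≤ n) :
    ((anticodeA q n t ε k).card < (anticodeA q n (t - 1) (ε + 2) k).card ↔
      n - t - ε < (q - 1) * (k - t - ε)) ∧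
    (n - t - ε < (q - 1) * (k - t - ε) ↔ n < (q - 2) * (k - t - ε) + k) := by
  have h1 := card_anticode q n t ε k (by omega) (by omega) hkn
  have h2 := card_anticode q n (t - 1) (ε + 2) k (by omega) (by omega) hkn
  set N := n - t - ε with hN
  set K := k - t - ε with hKdef
  have e1 : k - (t - 1) - (ε + 2) = K - 1 := by omega
  have e2 : n - (t - 1) - (ε + 2) = N - 1 := by omega
  have hK1 : 1 ≤ K := by omega
  have hNK : K ≤ N := by omega
  have hN1 : 1 ≤ N := by omega
  have e3 : (ε + 2) + (K - 1) = (ε + K) + 1 := by omega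
  rw [e1, e2, e3] at h2
  constructor
  · rw [h1, h2, pow_succ, ← mul_assoc, mul_right_comm]
    rw [Nat.mul_lt_mul_right (pow_pos (by omega : 0 < q - 1) (ε + K))]
    have hCpos : 0 < (N - 1).choose (K - 1) := Nat.choose_pos (by omega)
    have hch : N.choose K * K = N * (N - 1).choose (K - 1) := by
      have := Nat.add_one_mul_choose_eq (N - 1) (K - 1)
      have hNs : N - 1 + 1 = N := by omega
      have hKs : K - 1 + 1 = K := by omega
      rw [hNs, hKs] at this
      omega
    constructor
    · intro h
      have h' : N.choose K * K < (N - 1).choose (K - 1) * (q - 1) * K :=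
        (Nat.mul_lt_mul_right (show 0 < K by omega)).mpr h
      rw [hch] at h'
      have h'' : N * (N - 1).choose (K - 1) < ((q - 1) * K) * (N - 1).choose (K - 1) := by
        calc N * (N - 1).choose (K - 1) < (N - 1).choose (K - 1) * (q - 1) * K := h'
          _ = ((q - 1) * K) * (N - 1).choose (K - 1) := by ring
      exact (Nat.mul_lt_mul_right hCpos).mp h''
    · intro h
      have h' : N * (N - 1).choose (K - 1) < ((q - 1) * K) * (N - 1).choose (K - 1) :=
        (Nat.mul_lt_mul_right hCpos).mpr h
      rw [← hch] at h'
      have h'' : N.choose K * K < ((N - 1).choose (K - 1) * (q - 1)) * K := by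
        calc N.choose K * K < ((q - 1) * K) * (N - 1).choose (K - 1) := h'
          _ = ((N - 1).choose (K - 1) * (q - 1)) * K := by ring
      exact (Nat.mul_lt_mul_right (show 0 < K by omega)).mp h''
  · have hsplit : (q - 1) * K = (q - 2) * K + K := by
      have hq2 : q - 1 = (q - 2) + 1 := by omega
      rw [hq2, add_mul, one_mul]
    omega
end

section
/- For fixed q ≥ 2, k > t ≥ 0, the polynomial inequality (q-1)^k · Σ_{i=t+2}^{k} C(k,i)·C(n-k,k-i) < C(n-t-1,k-t-1)·(q-1)^(k-t) holds for all n > (q-1)^t·(k-t-1)^2·C(k,⌊k/2⌋) + 2k-t-2. -/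
open Finset

private lemma choose_mono_right_aux (a b : ℕ) :
    ∀ c, b ≤ c → c ≤ a / 2 → a.choose b ≤ a.choose c := by
  intro c
  induction c with
  | zero =>
    intro h _
    have hb : b = 0 := by omega
    rw [hb]
  | succ c ih =>
    intro h hc
    rcases Nat.lt_or_ge b (c + 1) with h' | h'
    · exact (ih (by omega) (by omega)).trans
        (Nat.choose_le_succ_of_lt_half_left (by omega))
    · have hb : b = c + 1 := by omega
      rw [hb]

/-- For fixed `q ≥ 2`, `k > t+1`, the inequality
`(q-1)^k · Σ_{i=t+2}^{k} C(k,i)·C(n-k,k-i) < C(n-t-1,k-t-1)·(q-1)^(k-t)`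
holds for all `n > (q-1)^t·(k-t-1)^2·C(k,⌊k/2⌋) + 2k-t-2`. -/
theorem polynomial_inequality (q k t : ℕ) (hq : 2 ≤ q) (htk : t + 1 < k) :
    ∀ n : ℕ, (q - 1) ^ t * (k - t - 1) ^ 2 * k.choose (k / 2) + 2 * k - t - 2 < n →
      (q - 1) ^ k * ∑ i ∈ Icc (t + 2) k, k.choose i * (n - k).choose (k - i)
        < (n - t - 1).choose (k - t - 1) * (q - 1) ^ (k - t) := by
  intro n hn
  set A := (q - 1) ^ t * (k - t - 1) ^ 2 * k.choose (k / 2) with hA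
  have hq1 : 1 ≤ q - 1 := by omega
  have hpt : 1 ≤ (q - 1) ^ t := Nat.one_le_pow _ _ (by omega)
  have hch : 1 ≤ k.choose (k / 2) := Nat.choose_pos (Nat.div_le_self _ _)
  have hsq : k - t - 1 ≤ (k - t - 1) ^ 2 := Nat.le_self_pow two_ne_zero _
  have hA2 : (k - t - 1) ^ 2 ≤ A := by
    calc (k - t - 1) ^ 2 = 1 * (k - t - 1) ^ 2 * 1 := by ring
    _ ≤ A := Nat.mul_le_mul (Nat.mul_le_mul hpt le_rfl) hch
  -- n is large
  have hnA : A < n - k + 1 := by omega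
  have hn2 : k + 2 * (k - t - 2) ≤ n := by omega
  -- sum bound
  have hsum : ∑ i ∈ Icc (t + 2) k, k.choose i * (n - k).choose (k - i)
      ≤ (k - t - 1) * (k.choose (k / 2) * (n - k).choose (k - t - 2)) := by
    calc ∑ i ∈ Icc (t + 2) k, k.choose i * (n - k).choose (k - i)
        ≤ ∑ _i ∈ Icc (t + 2) k, k.choose (k / 2) * (n - k).choose (k - t - 2) := by
          apply Finset.sum_le_sum
          intro i hi
          simp only [mem_Icc] at hi
          exact Nat.mul_le_mul (Nat.choose_le_middle _ _)
            (choose_mono_right_aux _ _ _ (by omega) (by omega))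
      _ = (k - t - 1) * (k.choose (k / 2) * (n - k).choose (k - t - 2)) := by
          rw [Finset.sum_const, smul_eq_mul, Nat.card_Icc]
          congr 1
          omega
  -- choose identity
  have key : (n - k + 1) * (n - k).choose (k - t - 2)
      = (k - t - 1) * (n - k + 1).choose (k - t - 1) := by
    have h1 : k - t - 1 = (k - t - 2) + 1 := by omega
    rw [h1]
    have h2 := Nat.add_one_mul_choose_eq (n - k) (k - t - 2)
    rw [h2]
    ring
  have hmono : (n - k + 1).choose (k - t - 1) ≤ (n - t - 1).choose (k - t - 1) :=
    Nat.choose_le_choose _ (by omega)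
  have hpos : 0 < (n - k).choose (k - t - 2) := Nat.choose_pos (by omega)
  -- core inequality after cancelling (q-1)^(k-t)
  have core : (q - 1) ^ t * ∑ i ∈ Icc (t + 2) k, k.choose i * (n - k).choose (k - i)
      < (n - t - 1).choose (k - t - 1) := by
    have hd : 0 < k - t - 1 := by omega
    apply Nat.lt_of_mul_lt_mul_left (a := k - t - 1)
    calc (k - t - 1) * ((q - 1) ^ t * ∑ i ∈ Icc (t + 2) k, k.choose i * (n - k).choose (k - i))
        ≤ (k - t - 1) * ((q - 1) ^ t *
            ((k - t - 1) * (k.choose (k / 2) * (n - k).choose (k - t - 2)))) :=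
          Nat.mul_le_mul_left _ (Nat.mul_le_mul_left _ hsum)
      _ = A * (n - k).choose (k - t - 2) := by rw [hA]; ring
      _ < (n - k + 1) * (n - k).choose (k - t - 2) := by
          exact Nat.mul_lt_mul_of_lt_of_le hnA le_rfl hpos
      _ = (k - t - 1) * (n - k + 1).choose (k - t - 1) := key
      _ ≤ (k - t - 1) * (n - t - 1).choose (k - t - 1) := Nat.mul_le_mul_left _ hmono
  -- conclude
  have hpow : (q - 1) ^ k = (q - 1) ^ (k - t) * (q - 1) ^ t := by
    rw [← pow_add]
    congr 1
    omega
  calc (q - 1) ^ k * ∑ i ∈ Icc (t + 2) k, k.choose i * (n - k).choose (k - i)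
      = (q - 1) ^ (k - t) *
        ((q - 1) ^ t * ∑ i ∈ Icc (t + 2) k, k.choose i * (n - k).choose (k - i)) := by
        rw [hpow, mul_assoc]
    _ < (q - 1) ^ (k - t) * (n - t - 1).choose (k - t - 1) :=
        mul_lt_mul_of_pos_left core (Nat.pow_pos (by omega))
    _ = (n - t - 1).choose (k - t - 1) * (q - 1) ^ (k - t) := Nat.mul_comm _ _
end
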